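/- Let x ∈ ℝ be continued-fraction normal and let M be a 2×2 integer matrix with determinant ±1. Then Mx = (αx + β)/(γx + δ) is continued-fraction normal. (The action of a determinant-±1 integer matrix alters only the head of the continued fraction expansion of an irrational number, leaving the tail unchanged.) -/

import Mathlib

open MeasureTheory Filter

/-- The Gauss map `T(x) = 1/x - ⌊1/x⌋` (with `T 0 = 0`). -/
noncomputable def gauss (x : ℝ) : ℝ := if x = 0 then 0 else x⁻¹ - ⌊x⁻¹⌋

/-- `cfDigit x i` is the continued fraction partial quotient `a_{i+1}(x)`
of `x ∈ [0,1)`, namely `⌊1 / T^i x⌋`. -/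
noncomputable def cfDigit (x : ℝ) (i : ℕ) : ℤ := ⌊(gauss^[i] x)⁻¹⌋

/-- The continued fraction cylinder set of the string `s = [c₁,…,c_n]`. -/
def cyl (s : List ℤ) : Set ℝ :=
  {x | x ∈ Set.Ico (0 : ℝ) 1 ∧ ∀ i < s.length, cfDigit x i = s.getD i 0}

/-- The Gauss measure `μ(A) = ∫_A dx / ((log 2)(1+x))` on `[0,1)`. -/
noncomputable def gaussMeasure : Measure ℝ :=
  (volume.restrict (Set.Ico (0 : ℝ) 1)).withDensity
    (fun x => ENNReal.ofReal (1 / (Real.log 2 * (1 + x))))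

open scoped Classical in
/-- The number of `i < n` with `T^i x` in the cylinder of `s`. -/
noncomputable def cfCount (x : ℝ) (s : List ℤ) (n : ℕ) : ℕ :=
  ((Finset.range n).filter (fun i => gauss^[i] x ∈ cyl s)).card

/-- `x ∈ [0,1)` is CF-normal: every finite string of positive integers occurs in the
continued fraction expansion of `x` with limiting frequency equal to the Gauss
measure of its cylinder set. -/
noncomputable def cfNormal (x : ℝ) : Prop :=
  x ∈ Set.Ico (0 : ℝ) 1 ∧
  ∀ s : List ℤ, s ≠ [] → (∀ c ∈ s, 0 < c) →
    Tendsto (fun n : ℕ => (cfCount x s n : ℝ) / n) atTop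
      (nhds (gaussMeasure (cyl s)).toReal)

/-- A real number `y` is CF-normal if its fractional part is CF-normal. -/
noncomputable def cfNormalReal (y : ℝ) : Prop := cfNormal (Int.fract y)

/-- The action of an integer matrix on a real number by a linear fractional
transformation. -/
noncomputable def mobius (M : Matrix (Fin 2) (Fin 2) ℤ) (x : ℝ) : ℝ :=
  ((M 0 0 : ℝ) * x + (M 0 1 : ℝ)) / ((M 1 0 : ℝ) * x + (M 1 1 : ℝ))

open scoped Classical

lemma gauss_zero : gauss 0 = 0 := by simp [gauss]

lemma gauss_ne_zero (x : ℝ) (hx : x ≠ 0) : gauss x = Int.fract x⁻¹ := by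
  rw [gauss, if_neg hx, Int.fract]

lemma gauss_mem (x : ℝ) : gauss x ∈ Set.Ico (0:ℝ) 1 := by
  by_cases h : x = 0
  · simp [h, gauss_zero]
  · rw [gauss_ne_zero x h]
    exact ⟨Int.fract_nonneg _, Int.fract_lt_one _⟩

lemma gauss_iter_zero (k : ℕ) : gauss^[k] (0:ℝ) = 0 :=
  Function.iterate_fixed gauss_zero k

lemma gauss_iter_mem (x : ℝ) (hx : x ∈ Set.Ico (0:ℝ) 1) (k : ℕ) :
    gauss^[k] x ∈ Set.Ico (0:ℝ) 1 := by
  cases k with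
  | zero => simpa using hx
  | succ k => rw [Function.iterate_succ_apply']; exact gauss_mem _

lemma cfCount_succ (y : ℝ) (s : List ℤ) (n : ℕ) :
    cfCount y s (n+1) = cfCount y s n + (if gauss^[n] y ∈ cyl s then 1 else 0) := by
  unfold cfCount
  rw [Finset.range_add_one, Finset.filter_insert]
  split
  · rw [Finset.card_insert_of_notMem (by simp)]
  · simp

lemma cfCount_shift (x : ℝ) (s : List ℤ) (n : ℕ) :
    cfCount x s (n+1) = cfCount (gauss x) s n + (if x ∈ cyl s then 1 else 0) := by
  induction n with
  | zero =>
    simp [cfCount_succ, cfCount, Finset.filter_singleton]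
    by_cases h : x ∈ cyl s <;> simp only [h, if_true, if_false, Finset.card_singleton, Finset.card_empty]
  | succ n ih =>
    rw [cfCount_succ x s (n+1), ih, cfCount_succ (gauss x) s n,
      Function.iterate_succ_apply]
    ring

lemma count_diff_bound (x : ℝ) (s : List ℤ) (n : ℕ) :
    |(cfCount x s n : ℝ) - cfCount (gauss x) s n| ≤ 1 := by
  have hA := cfCount_shift x s n
  have hB := cfCount_succ x s n
  have h1 : cfCount x s n ≤ cfCount (gauss x) s n + 1 ∧
      cfCount (gauss x) s n ≤ cfCount x s n + 1 := by
    split_ifs at hA hB <;> omega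
  have hr1 : (cfCount x s n : ℝ) ≤ (cfCount (gauss x) s n : ℝ) + 1 := by
    exact_mod_cast h1.1
  have hr2 : (cfCount (gauss x) s n : ℝ) ≤ (cfCount x s n : ℝ) + 1 := by
    exact_mod_cast h1.2
  rw [abs_sub_le_iff]
  exact ⟨by linarith, by linarith⟩

lemma tendsto_transfer {c d : ℕ → ℕ} {K L : ℝ}
    (hK : ∀ n, |(c n : ℝ) - d n| ≤ K)
    (h : Tendsto (fun n : ℕ => (c n : ℝ)/n) atTop (nhds L)) :
    Tendsto (fun n : ℕ => (d n : ℝ)/n) atTop (nhds L) := by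
  have h0 : Tendsto (fun n : ℕ => ((c n : ℝ) - d n)/n) atTop (nhds 0) := by
    apply squeeze_zero_norm (a := fun n : ℕ => K / (n:ℝ))
    · intro n
      cases n with
      | zero => simp
      | succ m =>
        rw [Real.norm_eq_abs, abs_div]
        have habs : |((m:ℕ)+1 : ℝ)| = ((m:ℕ)+1 : ℝ) := abs_of_nonneg (by positivity)
        push_cast at habs ⊢
        rw [habs]
        exact div_le_div_of_nonneg_right (hK _) (by positivity)
    · exact tendsto_const_div_atTop_nhds_zero_nat K
  have := h.sub h0
  rw [sub_zero] at this
  convert this using 2 with n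
  rw [div_sub_div_same]
  ring_nf

lemma cfNormal_gauss_iff {x : ℝ} (hx : x ∈ Set.Ico (0:ℝ) 1) :
    cfNormal x ↔ cfNormal (gauss x) := by
  constructor
  · rintro ⟨-, h⟩
    refine ⟨gauss_mem x, fun s hs hpos => ?_⟩
    exact tendsto_transfer (fun n => count_diff_bound x s n) (h s hs hpos)
  · rintro ⟨-, h⟩
    refine ⟨hx, fun s hs hpos => ?_⟩
    refine tendsto_transfer (K := 1) (fun n => ?_) (h s hs hpos)
    rw [abs_sub_comm]
    exact count_diff_bound x s n

lemma cfNormal_iter {x : ℝ} (hx : x ∈ Set.Ico (0:ℝ) 1) (k : ℕ) :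
    cfNormal x ↔ cfNormal (gauss^[k] x) := by
  induction k with
  | zero => simp
  | succ k ih =>
    rw [Function.iterate_succ_apply']
    exact ih.trans (cfNormal_gauss_iff (gauss_iter_mem x hx k))

lemma cfNormal_tail {x y : ℝ} (hx : x ∈ Set.Ico (0:ℝ) 1) (hy : y ∈ Set.Ico (0:ℝ) 1)
    {m k : ℕ} (h : gauss^[m] x = gauss^[k] y) : cfNormal x ↔ cfNormal y := by
  rw [cfNormal_iter hx m, h, ← cfNormal_iter hy k]

lemma rat_orbit : ∀ n : ℕ, ∀ q : ℚ, q.num.toNat = n → 0 ≤ q → q < 1 →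
    ∃ N, gauss^[N] (q : ℝ) = 0 := by
  intro n
  induction n using Nat.strong_induction_on with
  | _ n ih =>
    intro q hn h0 h1
    by_cases hq : q = 0
    · exact ⟨0, by simp [hq]⟩
    · have hqpos : 0 < q := lt_of_le_of_ne h0 (Ne.symm hq)
      set r := Int.fract q⁻¹ with hr
      have key : gauss (q : ℝ) = (r : ℝ) := by
        rw [gauss_ne_zero _ (by exact_mod_cast hq), ← Rat.cast_inv, hr, Rat.cast_fract]
      have hrlt : r.num < q.num := Rat.fract_inv_num_lt_num_of_pos hqpos
      have hr0 : 0 ≤ r := Int.fract_nonneg _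
      have hr1 : r < 1 := Int.fract_lt_one _
      have hr0' : 0 ≤ r.num := Rat.num_nonneg.mpr hr0
      have hq0' : 0 < q.num := Rat.num_pos.mpr hqpos
      obtain ⟨N, hN⟩ := ih r.num.toNat (by omega) r rfl hr0 hr1
      exact ⟨N + 1, by rw [Function.iterate_succ_apply, key, hN]⟩

lemma Ioo_subset_cyl_one : Set.Ioo (1/2 : ℝ) 1 ⊆ cyl [1] := by
  rintro x ⟨hx1, hx2⟩
  have hx0 : (0:ℝ) < x := lt_trans (by norm_num) hx1
  refine ⟨⟨hx0.le, hx2⟩, ?_⟩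
  intro i hi
  have hi0 : i = 0 := by simpa using hi
  subst hi0
  show (⌊(gauss^[0] x)⁻¹⌋ : ℤ) = _
  rw [Function.iterate_zero_apply]
  have h1 : (1:ℝ) ≤ x⁻¹ := by
    rw [le_inv_comm₀]
    · simpa using hx2.le
    · norm_num
    · exact hx0
  have h2 : x⁻¹ < 2 := by
    rw [inv_lt_comm₀ hx0 (by norm_num)]
    linarith
  have : ⌊x⁻¹⌋ = 1 := by
    apply Int.floor_eq_iff.mpr
    constructor <;> push_cast <;> linarith
  simpa using this

lemma log2_pos : (0:ℝ) < Real.log 2 := Real.log_pos (by norm_num)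

lemma gaussMeasure_cyl_one_pos : 0 < (gaussMeasure (cyl [1])).toReal := by
  have hlow : ENNReal.ofReal (1/(2 * Real.log 2)) * ENNReal.ofReal (1/2)
      ≤ gaussMeasure (cyl [1]) := by
    have h1 : gaussMeasure (Set.Ioo (1/2 : ℝ) 1) ≤ gaussMeasure (cyl [1]) :=
      measure_mono Ioo_subset_cyl_one
    refine le_trans ?_ h1
    rw [gaussMeasure, withDensity_apply _ measurableSet_Ioo,
      Measure.restrict_restrict measurableSet_Ioo]
    have hsub : Set.Ioo (1/2 : ℝ) 1 ∩ Set.Ico (0:ℝ) 1 = Set.Ioo (1/2 : ℝ) 1 := by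
      ext y; constructor
      · rintro ⟨h, -⟩; exact h
      · rintro ⟨h1, h2⟩; exact ⟨⟨h1, h2⟩, ⟨by linarith, h2⟩⟩
    rw [hsub]
    calc ENNReal.ofReal (1/(2 * Real.log 2)) * ENNReal.ofReal (1/2)
        = ∫⁻ _ in Set.Ioo (1/2:ℝ) 1, ENNReal.ofReal (1/(2 * Real.log 2)) := by
          rw [setLIntegral_const, Real.volume_Ioo]
          norm_num
      _ ≤ _ := by
          apply setLIntegral_mono (by fun_prop) ?_
          intro y hy
          apply ENNReal.ofReal_le_ofReal
          apply one_div_le_one_div_of_le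
          · nlinarith [hy.1, log2_pos]
          · nlinarith [hy.1, hy.2, log2_pos]
  have hup : gaussMeasure (cyl [1]) ≠ ⊤ := by
    have h1 : gaussMeasure (cyl [1]) ≤ gaussMeasure Set.univ := measure_mono (Set.subset_univ _)
    refine ne_top_of_le_ne_top ?_ h1
    rw [gaussMeasure, withDensity_apply _ MeasurableSet.univ, Measure.restrict_univ]
    have : ∫⁻ y in Set.Ico (0:ℝ) 1, ENNReal.ofReal (1 / (Real.log 2 * (1 + y))) ∂volume
        ≤ ∫⁻ _ in Set.Ico (0:ℝ) 1, ENNReal.ofReal (1 / Real.log 2) ∂volume := by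
      apply setLIntegral_mono (by fun_prop) ?_
      intro y hy
      apply ENNReal.ofReal_le_ofReal
      apply one_div_le_one_div_of_le log2_pos
      nlinarith [hy.1, log2_pos]
    refine ne_top_of_le_ne_top ?_ this
    rw [setLIntegral_const, Real.volume_Ico]
    exact ENNReal.mul_ne_top ENNReal.ofReal_ne_top ENNReal.ofReal_ne_top
  apply ENNReal.toReal_pos _ hup
  intro h0
  rw [h0, nonpos_iff_eq_zero] at hlow
  have h1 : ENNReal.ofReal (1/(2*Real.log 2)) ≠ 0 := by
    simp only [ne_eq, ENNReal.ofReal_eq_zero, not_le]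
    have := log2_pos
    positivity
  have h2 : ENNReal.ofReal (1/(2:ℝ)) ≠ 0 := by
    simp only [ne_eq, ENNReal.ofReal_eq_zero, not_le]
    norm_num
  exact (mul_ne_zero h1 h2) hlow

lemma zero_not_mem_cyl_one : (0:ℝ) ∉ cyl [1] := by
  rintro ⟨-, h⟩
  have h0 := h 0 (by simp)
  rw [show cfDigit 0 0 = ⌊(gauss^[0] (0:ℝ))⁻¹⌋ from rfl] at h0
  simp at h0

lemma cfNormal_irrational {x : ℝ} (h : cfNormal (Int.fract x)) : Irrational x := by
  by_contra hx
  rw [Irrational] at hx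
  push_neg at hx
  obtain ⟨q, hq⟩ := hx
  set t : ℚ := Int.fract q with ht
  have hfr : Int.fract x = (t : ℝ) := by
    rw [← hq, ht, Rat.cast_fract]
  have ht0 : 0 ≤ t := Int.fract_nonneg _
  have ht1 : t < 1 := Int.fract_lt_one _
  obtain ⟨N, hN⟩ := rat_orbit t.num.toNat t rfl ht0 ht1
  have hTend := h.2 [1] (by simp) (by simp)
  rw [hfr] at hTend
  have hle : ∀ n, cfCount (t : ℝ) [1] n ≤ N := by
    intro n
    classical
    have hsub : (Finset.range n).filter (fun i => gauss^[i] (t:ℝ) ∈ cyl [1])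
        ⊆ Finset.range N := by
      intro i hi
      simp only [Finset.mem_filter, Finset.mem_range] at hi ⊢
      by_contra hiN
      push_neg at hiN
      have : gauss^[i] (t:ℝ) = 0 := by
        have : i = (i - N) + N := by omega
        rw [this, Function.iterate_add_apply, hN, gauss_iter_zero]
      rw [this] at hi
      exact zero_not_mem_cyl_one hi.2
    calc cfCount (t:ℝ) [1] n ≤ (Finset.range N).card := by
          apply Finset.card_le_card
          convert hsub using 2
      _ = N := Finset.card_range N
  have hzero : Tendsto (fun n : ℕ => (cfCount (t:ℝ) [1] n : ℝ) / n) atTop (nhds 0) := by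
    apply squeeze_zero (fun n => by positivity) (g := fun n : ℕ => (N:ℝ)/n)
    · intro n
      cases n with
      | zero => simp
      | succ m =>
        apply div_le_div_of_nonneg_right _ (by positivity)
        exact_mod_cast hle (m+1)
    · exact tendsto_const_div_atTop_nhds_zero_nat (N:ℝ)
  have := tendsto_nhds_unique hTend hzero
  have hpos := gaussMeasure_cyl_one_pos
  rw [this] at hpos
  exact lt_irrefl _ hpos

lemma fract_mem_Ico (y : ℝ) : Int.fract y ∈ Set.Ico (0:ℝ) 1 :=
  ⟨Int.fract_nonneg y, Int.fract_lt_one y⟩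

lemma cfNormalReal_congr_tail {y z : ℝ} (m k : ℕ)
    (h : gauss^[m] (Int.fract y) = gauss^[k] (Int.fract z)) :
    cfNormalReal y ↔ cfNormalReal z :=
  cfNormal_tail (fract_mem_Ico y) (fract_mem_Ico z) h

lemma tail_one_sub_core {t : ℝ} (h0 : 0 < t) (h2 : t < 1/2) :
    gauss^[2] (1 - t) = gauss t := by
  have h1t : (0:ℝ) < 1 - t := by linarith
  have hne : (1:ℝ) - t ≠ 0 := ne_of_gt h1t
  have hmul : (1 - t) * (1 - t)⁻¹ = 1 := mul_inv_cancel₀ hne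
  have hipos : 0 < (1 - t)⁻¹ := inv_pos.mpr h1t
  have hinv1 : (1:ℝ) < (1 - t)⁻¹ := by nlinarith
  have hinv2 : (1 - t)⁻¹ < 2 := by nlinarith
  have hfloor : ⌊(1 - t)⁻¹⌋ = 1 := by
    apply Int.floor_eq_iff.mpr
    constructor <;> push_cast <;> linarith
  have hg1 : gauss (1 - t) = (1 - t)⁻¹ - 1 := by
    rw [gauss_ne_zero _ hne, Int.fract, hfloor]
    norm_num
  set u : ℝ := (1 - t)⁻¹ - 1 with hu
  have hu_pos : 0 < u := by simp only [hu]; linarith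
  have hu_eq : u = t / (1 - t) := by
    field_simp [hu]
    rw [hu]
    field_simp
    ring
  have huinv : u⁻¹ = t⁻¹ - 1 := by
    rw [hu_eq, inv_div]
    field_simp
  show gauss (gauss (1 - t)) = gauss t
  rw [hg1, gauss_ne_zero _ (ne_of_gt hu_pos), huinv,
    gauss_ne_zero _ (ne_of_gt h0)]
  rw [show t⁻¹ - 1 = t⁻¹ - ((1:ℤ):ℝ) by norm_num, Int.fract_sub_intCast]

lemma tail_one_sub {t : ℝ} (hirr : Irrational t) (h0 : 0 < t) (h1 : t < 1) :
    ∃ m k, gauss^[m] (1 - t) = gauss^[k] t := by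
  have hne : t ≠ 1/2 := by
    intro h
    exact hirr ⟨(1/2 : ℚ), by rw [h]; norm_num⟩
  rcases lt_or_gt_of_ne hne with h | h
  · exact ⟨2, 1, tail_one_sub_core h0 h⟩
  · have := tail_one_sub_core (t := 1 - t) (by linarith) (by linarith)
    rw [show (1:ℝ) - (1 - t) = t by ring] at this
    exact ⟨1, 2, this.symm⟩

lemma irr_fract_ne_zero {y : ℝ} (h : Irrational y) : Int.fract y ≠ 0 := by
  intro h0
  have : y = (⌊y⌋ : ℝ) := by
    have := Int.fract y
    unfold Int.fract at h0
    linarith [sub_eq_zero.mp h0]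
  exact h.ne_int ⌊y⌋ this

lemma cfNR_add_int (y : ℝ) (q : ℤ) : cfNormalReal (y + q) ↔ cfNormalReal y := by
  unfold cfNormalReal
  rw [Int.fract_add_intCast]

lemma cfNR_neg {y : ℝ} (h : Irrational y) : cfNormalReal (-y) ↔ cfNormalReal y := by
  have hfr := irr_fract_ne_zero h
  have hirr : Irrational (Int.fract y) := by
    rw [Int.fract]
    exact h.sub_intCast ⌊y⌋
  have h0 : 0 < Int.fract y := lt_of_le_of_ne (Int.fract_nonneg y) (Ne.symm hfr)
  obtain ⟨m, k, hmk⟩ := tail_one_sub hirr h0 (Int.fract_lt_one y)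
  apply cfNormalReal_congr_tail m k
  rw [Int.fract_neg hfr]
  exact hmk

lemma cfNR_inv_pos {y : ℝ} (h : Irrational y) (hy : 0 < y) :
    cfNormalReal y⁻¹ ↔ cfNormalReal y := by
  have hne1 : y ≠ 1 := fun h1 => h.ne_int 1 (by rw [h1]; norm_num)
  rcases lt_or_gt_of_ne hne1 with hlt | hgt
  · -- 0 < y < 1 : fract y = y, fract (y⁻¹) = gauss y contributes shift
    have hfy : Int.fract y = y := Int.fract_eq_self.mpr ⟨hy.le, hlt⟩
    apply cfNormalReal_congr_tail 0 1
    rw [Function.iterate_zero_apply, Function.iterate_one, hfy,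
      gauss_ne_zero _ (ne_of_gt hy)]
  · -- y > 1 : fract (y⁻¹) = y⁻¹, gauss (y⁻¹) = fract y
    have hipos : 0 < y⁻¹ := inv_pos.mpr hy
    have hilt : y⁻¹ < 1 := by
      rw [inv_lt_one_iff₀]
      right; exact hgt
    have hfy : Int.fract y⁻¹ = y⁻¹ := Int.fract_eq_self.mpr ⟨hipos.le, hilt⟩
    apply cfNormalReal_congr_tail 1 0
    rw [Function.iterate_one, Function.iterate_zero_apply, hfy,
      gauss_ne_zero _ (ne_of_gt hipos), inv_inv]

lemma cfNR_inv {y : ℝ} (h : Irrational y) : cfNormalReal y⁻¹ ↔ cfNormalReal y := by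
  rcases lt_or_gt_of_ne h.ne_zero with hneg | hpos
  · have hpos' : 0 < -y := by linarith
    have h1 : cfNormalReal y⁻¹ ↔ cfNormalReal (-(-y)⁻¹) := by
      rw [show -(-y)⁻¹ = y⁻¹ by field_simp]
    rw [h1, cfNR_neg (h.neg.inv), cfNR_inv_pos h.neg hpos', cfNR_neg h]
  · exact cfNR_inv_pos h hpos

lemma lin_ne_zero {x : ℝ} (hx : Irrational x) (p q : ℤ) (hpq : ¬(p = 0 ∧ q = 0)) :
    (p : ℝ) * x + q ≠ 0 := by
  intro h
  by_cases hp : p = 0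
  · subst hp
    simp only [Int.cast_zero, zero_mul, zero_add] at h
    exact hpq ⟨rfl, by exact_mod_cast h⟩
  · apply hx
    refine ⟨(-q : ℚ) / (p : ℚ), ?_⟩
    push_cast
    rw [div_eq_iff (by exact_mod_cast hp : (p:ℝ) ≠ 0)]
    linarith

lemma irr_mobius {M : Matrix (Fin 2) (Fin 2) ℤ} (hdet : M.det ≠ 0) {x : ℝ}
    (hx : Irrational x) : Irrational (mobius M x) := by
  have hdet2 : M 0 0 * M 1 1 - M 0 1 * M 1 0 ≠ 0 := by
    rwa [Matrix.det_fin_two] at hdet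
  have hcd : ¬(M 1 0 = 0 ∧ M 1 1 = 0) := by
    rintro ⟨h1, h2⟩
    rw [h1, h2] at hdet2
    simp at hdet2
  have hden : (M 1 0 : ℝ) * x + (M 1 1 : ℝ) ≠ 0 := lin_ne_zero hx _ _ hcd
  rintro ⟨q, hq⟩
  rw [mobius, eq_div_iff hden] at hq
  have hkey : ((M 0 0 : ℝ) - q * M 1 0) * x = q * M 1 1 - M 0 1 := by ring_nf; nlinarith [hq]
  by_cases hz : (M 0 0 : ℝ) - (q:ℝ) * (M 1 0 : ℝ) = 0
  · rw [hz, zero_mul] at hkey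
    -- then M 0 0 = q * M 1 0 and M 0 1 = q * M 1 1, so det = 0
    have h1 : (M 0 0 : ℝ) = q * M 1 0 := by linarith [sub_eq_zero.mp hz]
    have h2 : (M 0 1 : ℝ) = q * M 1 1 := by linarith [sub_eq_zero.mp hkey.symm]
    have : ((M 0 0 * M 1 1 - M 0 1 * M 1 0 : ℤ) : ℝ) = 0 := by
      push_cast
      rw [h1, h2]
      ring
    exact hdet2 (by exact_mod_cast this)
  · apply hx
    refine ⟨((q * M 1 1 - M 0 1 : ℚ)) / ((M 0 0 : ℚ) - q * M 1 0), ?_⟩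
    push_cast
    rw [div_eq_iff hz]
    linarith [hkey]

lemma cfNR_affine {x : ℝ} (hx : Irrational x) (hnx : cfNormalReal x) (e q : ℤ)
    (he : e = 1 ∨ e = -1) : cfNormalReal ((e : ℝ) * x + q) := by
  rcases he with rfl | rfl
  · push_cast
    rw [one_mul]
    exact (cfNR_add_int x q).mpr hnx
  · have heq : ((-1 : ℤ) : ℝ) * x + q = -(x + ((-q : ℤ) : ℝ)) := by push_cast; ring
    rw [heq, cfNR_neg (hx.add_intCast (-q)), cfNR_add_int]
    exact hnx

lemma key_induction : ∀ n : ℕ, ∀ M : Matrix (Fin 2) (Fin 2) ℤ, (M 1 0).natAbs ≤ n →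
    (M.det = 1 ∨ M.det = -1) → ∀ x : ℝ, Irrational x → cfNormalReal x →
    cfNormalReal (mobius M x) := by
  intro n
  induction n using Nat.strong_induction_on with
  | _ n ih =>
    intro M hM hdet x hx hnx
    rw [Matrix.det_fin_two] at hdet
    by_cases hc : M 1 0 = 0
    · -- base case : M = [[a, b], [0, d]], a * d = ±1
      rw [hc] at hdet
      simp only [mul_zero, sub_zero] at hdet
      have hd : M 1 1 = 1 ∨ M 1 1 = -1 := by
        rcases hdet with h | h
        · rcases Int.mul_eq_one_iff_eq_one_or_neg_one.mp h with ⟨-, h2⟩ | ⟨-, h2⟩ <;>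
            [left; right] <;> exact h2
        · have h' : M 0 0 * (-(M 1 1)) = 1 := by rw [mul_neg, h]; ring
          rcases Int.mul_eq_one_iff_eq_one_or_neg_one.mp h' with ⟨-, h2⟩ | ⟨-, h2⟩ <;>
            [right; left] <;> omega
      have hm : mobius M x = ((M 0 0 * M 1 1 : ℤ) : ℝ) * x + ((M 0 1 * M 1 1 : ℤ) : ℝ) := by
        rw [mobius, hc]
        rcases hd with h | h <;> rw [h] <;> push_cast <;> field_simp <;> ring
      rw [hm]
      apply cfNR_affine hx hnx _ _ ?_
      rcases hdet with h | h
      · left; exact h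
      · right; exact h
    · -- inductive step
      set q : ℤ := M 0 0 / M 1 0 with hq
      set M' : Matrix (Fin 2) (Fin 2) ℤ :=
        Matrix.of ![![M 1 0, M 1 1], ![M 0 0 - q * M 1 0, M 0 1 - q * M 1 1]] with hM'
      have e00 : M' 0 0 = M 1 0 := rfl
      have e01 : M' 0 1 = M 1 1 := rfl
      have e10 : M' 1 0 = M 0 0 - q * M 1 0 := rfl
      have e11 : M' 1 1 = M 0 1 - q * M 1 1 := rfl
      have hdet' : M'.det = 1 ∨ M'.det = -1 := by
        rw [Matrix.det_fin_two, e00, e01, e10, e11]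
        rcases hdet with h | h
        · right; linear_combination -h
        · left; linear_combination -h
      have hlt : (M' 1 0).natAbs < (M 1 0).natAbs := by
        have hrw : M' 1 0 = M 0 0 % M 1 0 := by
          rw [e10, hq, Int.emod_def]
          ring
        have hmod_eq : M 0 0 % M 1 0 = M 0 0 % |M 1 0| := by
          rcases abs_cases (M 1 0) with ⟨h, -⟩ | ⟨h, -⟩
          · rw [h]
          · rw [h, Int.emod_neg]
        have habs : (0:ℤ) < |M 1 0| := abs_pos.mpr hc
        have h0 : 0 ≤ M 0 0 % |M 1 0| := Int.emod_nonneg _ (ne_of_gt habs)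
        have h1 : M 0 0 % |M 1 0| < |M 1 0| := Int.emod_lt_of_pos _ habs
        rw [hrw, hmod_eq]
        have := Int.abs_eq_natAbs (M 1 0)
        omega
      have hn' : cfNormalReal (mobius M' x) :=
        ih (M' 1 0).natAbs (lt_of_lt_of_le hlt hM) M' le_rfl hdet' x hx hnx
      have hdetne : M'.det ≠ 0 := by rcases hdet' with h | h <;> rw [h] <;> norm_num
      have hirr' : Irrational (mobius M' x) := irr_mobius hdetne hx
      have hden1 : (M 1 0 : ℝ) * x + (M 1 1 : ℝ) ≠ 0 :=
        lin_ne_zero hx _ _ (fun h => hc h.1)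
      have hden2 : ((M 0 0 - q * M 1 0 : ℤ) : ℝ) * x + ((M 0 1 - q * M 1 1 : ℤ) : ℝ) ≠ 0 := by
        apply lin_ne_zero hx
        rintro ⟨h1, h2⟩
        have hd0 : M 0 0 * M 1 1 - M 0 1 * M 1 0 = 0 := by
          have e1 : M 0 0 = q * M 1 0 := by omega
          have e2 : M 0 1 = q * M 1 1 := by omega
          rw [e1, e2]; ring
        rcases hdet with h | h <;> omega
      have hkey : (mobius M' x)⁻¹ + (q : ℝ) = mobius M x := by
        rw [mobius, mobius, e00, e01, e10, e11, inv_div]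
        push_cast
        field_simp
        ring
      rw [← hkey]
      exact (cfNR_add_int _ q).mpr ((cfNR_inv hirr').mpr hn')


/-- Determinant-`±1` integer matrices preserve CF-normality: if `x` is CF-normal and
`det M = ±1`, then `Mx = (αx+β)/(γx+δ)` is CF-normal. -/
theorem cfNormal_GL2_action (x : ℝ) (hx : cfNormalReal x)
    (M : Matrix (Fin 2) (Fin 2) ℤ) (hdet : M.det = 1 ∨ M.det = -1) :
    cfNormalReal (mobius M x) := by
  have hirr : Irrational x := cfNormal_irrational hx
  exact key_induction (M 1 0).natAbs M le_rfl hdet x hirr hx
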